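/- Let k ≥ 1 and Q₁,…,Q_k ≥ 0 be integers and let N be a complex number. Then (1/(2πi)^{k}) ∮_{|w₁|=1} ⋯ ∮_{|w_k|=1} e^{N(w₁+⋯+w_k)} · Δ²(w) / ∏_{l=1}^{k} w_l^{2k+Q_l} dw₁⋯dw_k = Σ_{σ∈S_k} det_{k×k}( N^{2k+Q_{σ(i)}−1−(i+j−2)} / (2k+Q_{σ(i)}−1−(i+j−2))! ); every exponent 2k+Q_{σ(i)}−1−(i+j−2) occurring is a positive integer. -/

import Mathlib

open Finset

noncomputable section

/-- The iterated contour integral `∮_{|w₁|=1} ⋯ ∮_{|w_n|=1} f(w₁,…,w_n) dw_n ⋯ dw₁`,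
each circle positively oriented. -/
def multiCircle : (n : ℕ) → ((Fin n → ℂ) → ℂ) → ℂ
  | 0, f => f ![]
  | n + 1, f => circleIntegral (fun w => multiCircle n (fun v => f (Fin.cons w v))) 0 1

def expNSeries (N : ℂ) : FormalMultilinearSeries ℂ ℂ ℂ := fun n =>
  ContinuousMultilinearMap.mkPiRing ℂ (Fin n) (N ^ n / n.factorial)

lemma hasFPowerSeriesOnBall_expN (N : ℂ) :
    HasFPowerSeriesOnBall (fun z => Complex.exp (N * z)) (expNSeries N) 0 1 := by
  constructor
  · apply FormalMultilinearSeries.le_radius_of_summable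
    simp only [expNSeries, ContinuousMultilinearMap.norm_mkPiRing]
    simpa using (Real.summable_pow_div_factorial ‖N‖).mul_right 1
  · exact one_pos
  · intro y hy
    have h := NormedSpace.expSeries_div_hasSum_exp (N * y)
    rw [← Complex.exp_eq_exp_ℂ] at h
    simp only [expNSeries, ContinuousMultilinearMap.mkPiRing_apply, Fin.prod_const, zero_add,
      smul_eq_mul]
    convert h using 2 with n
    · rfl
    rw [mul_pow]; ring

lemma two_pi_I_ne : (2 * (Real.pi : ℂ) * Complex.I) ≠ 0 := by
  simp [Real.pi_ne_zero, Complex.I_ne_zero, Complex.ofReal_ne_zero]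

lemma circleIntegral_exp_div (N : ℂ) (n : ℕ) :
    (∮ z in C(0, 1), Complex.exp (N * z) / z ^ (n + 1)) =
      2 * Real.pi * Complex.I * (N ^ n / n.factorial) := by
  have hd : DifferentiableOn ℂ (fun z => Complex.exp (N * z))
      (Metric.closedBall 0 ((1 : NNReal) : ℝ)) :=
    (Complex.differentiable_exp.comp ((differentiable_const N).mul differentiable_id)).differentiableOn
  have h1 := hd.hasFPowerSeriesOnBall (R := 1) one_pos
  have h2 := hasFPowerSeriesOnBall_expN N
  have heq : cauchyPowerSeries (fun z => Complex.exp (N * z)) 0 ((1 : NNReal) : ℝ) = expNSeries N := by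
    have := h1.hasFPowerSeriesAt.eq_formalMultilinearSeries (by simpa using h2.hasFPowerSeriesAt)
    simpa using this
  have happ := congrArg (fun p : FormalMultilinearSeries ℂ ℂ ℂ => p n (fun _ => (1 : ℂ))) heq
  simp only [cauchyPowerSeries_apply, expNSeries, ContinuousMultilinearMap.mkPiRing_apply,
    Fin.prod_const, one_pow, smul_eq_mul, one_mul, sub_zero] at happ
  have hfun : (fun z : ℂ => (1 / z) ^ n * (z⁻¹ * Complex.exp (N * z))) =
      fun z : ℂ => Complex.exp (N * z) / z ^ (n + 1) := by
    funext z
    by_cases hz : z = 0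
    · subst hz; simp [zero_pow (Nat.succ_ne_zero n)]
    · field_simp [pow_succ]
      rw [div_pow, one_pow, pow_succ]; field_simp
  rw [hfun, NNReal.coe_one] at happ
  rw [← happ]
  rw [← mul_assoc, mul_inv_cancel₀ two_pi_I_ne, one_mul]

lemma circleIntegral_exp_pow_div (N : ℂ) (p m : ℕ) (hpm : p < m) :
    (∮ z in C(0, 1), Complex.exp (N * z) * z ^ p / z ^ m) =
      2 * Real.pi * Complex.I * (N ^ (m - 1 - p) / (m - 1 - p).factorial) := by
  have hfun : (fun z : ℂ => Complex.exp (N * z) * z ^ p / z ^ m) =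
      fun z : ℂ => Complex.exp (N * z) / z ^ ((m - 1 - p) + 1) := by
    funext z
    by_cases hz : z = 0
    · subst hz
      rw [zero_pow (by omega : m ≠ 0), zero_pow (Nat.succ_ne_zero _), div_zero, div_zero]
    · rw [show z ^ m = z ^ p * z ^ ((m - 1 - p) + 1) by rw [← pow_add]; congr 1; omega,
        mul_comm (Complex.exp (N * z)), mul_div_mul_left _ _ (pow_ne_zero p hz)]
  rw [hfun, circleIntegral_exp_div]

lemma circleIntegrable_exp_pow_div (N : ℂ) (p m : ℕ) :
    CircleIntegrable (fun z : ℂ => Complex.exp (N * z) * z ^ p / z ^ m) 0 1 := by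
  apply ContinuousOn.circleIntegrable zero_le_one
  apply ContinuousOn.div
  · exact (Complex.continuous_exp.comp ((continuous_const.mul continuous_id)) |>.mul
      (continuous_pow p)).continuousOn
  · exact (continuous_pow m).continuousOn
  · intro z hz
    have : z ≠ 0 := by
      rw [mem_sphere_zero_iff_norm] at hz
      intro h; rw [h] at hz; simp at hz
    exact pow_ne_zero _ this

lemma circleIntegral_sum {ι : Type*} (s : Finset ι) (f : ι → ℂ → ℂ)
    (hf : ∀ a ∈ s, CircleIntegrable (f a) 0 1) :
    (∮ z in C(0, 1), ∑ a ∈ s, f a z) = ∑ a ∈ s, ∮ z in C(0, 1), f a z := by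
  simp only [circleIntegral, smul_sum]
  exact intervalIntegral.integral_finset_sum fun a ha => (hf a ha).out

lemma CircleIntegrable.cmul {f : ℂ → ℂ} (hf : CircleIntegrable f 0 1) (a : ℂ) :
    CircleIntegrable (fun z => a * f z) 0 1 :=
  IntervalIntegrable.const_mul hf a

lemma multiCircle_sum_prod {ι : Type*} (s : Finset ι) :
    ∀ (n : ℕ) (c : ι → ℂ) (g : ι → Fin n → ℂ → ℂ),
      (∀ a ∈ s, ∀ i, CircleIntegrable (g a i) 0 1) →
      multiCircle n (fun w => ∑ a ∈ s, c a * ∏ i, g a i (w i)) =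
        ∑ a ∈ s, c a * ∏ i, (∮ z in C(0, 1), g a i z) := by
  intro n
  induction n with
  | zero => intro c g _; simp [multiCircle]
  | succ n ih =>
    intro c g hg
    rw [multiCircle]
    have h1 : (fun z => multiCircle n fun v =>
          (fun w : Fin (n+1) → ℂ => ∑ a ∈ s, c a * ∏ i, g a i (w i)) (Fin.cons z v))
        = fun z => ∑ a ∈ s, (c a * ∏ i : Fin n, (∮ y in C(0, 1), g a i.succ y)) * g a 0 z := by
      funext z
      have h2 : (fun v : Fin n → ℂ =>
            (fun w : Fin (n+1) → ℂ => ∑ a ∈ s, c a * ∏ i, g a i (w i)) (Fin.cons z v))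
          = fun v => ∑ a ∈ s, (c a * g a 0 z) * ∏ i : Fin n, g a i.succ (v i) := by
        funext v
        refine Finset.sum_congr rfl fun a _ => ?_
        rw [Fin.prod_univ_succ]
        simp [mul_assoc]
      rw [h2, ih (fun a => c a * g a 0 z) (fun a i => g a i.succ)
        (fun a ha i => hg a ha i.succ)]
      refine Finset.sum_congr rfl fun a _ => by ring
    rw [h1, circleIntegral_sum s _ (fun a ha => (hg a ha 0).cmul _)]
    refine Finset.sum_congr rfl fun a ha => ?_
    rw [circleIntegral.integral_const_mul, Fin.prod_univ_succ]
    ring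

lemma vandermonde_sq (k : ℕ) (w : Fin k → ℂ) :
    (∏ p ∈ Finset.univ.filter (fun p : Fin k × Fin k => p.1 < p.2), (w p.1 - w p.2)) ^ 2 =
      (Matrix.det (Matrix.vandermonde w)) ^ 2 := by
  rw [Matrix.det_vandermonde, ← Finset.prod_pow, Finset.prod_filter, Fintype.prod_prod_type,
    ← Finset.prod_pow]
  refine Finset.prod_congr rfl fun i _ => ?_
  rw [← Finset.prod_pow, ← Finset.filter_lt_eq_Ioi, ← Finset.prod_filter]
  refine Finset.prod_congr rfl fun j _ => ?_
  rw [← neg_sub (w j) (w i), neg_sq]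

lemma vandermonde_det_expand (k : ℕ) (w : Fin k → ℂ) :
    Matrix.det (Matrix.vandermonde w) =
      ∑ σ : Equiv.Perm (Fin k), ((Equiv.Perm.sign σ : ℤ) : ℂ) * ∏ i, w i ^ (σ i : ℕ) := by
  rw [← Matrix.det_transpose, Matrix.det_apply]
  refine Finset.sum_congr rfl fun σ _ => ?_
  rw [Units.smul_def, zsmul_eq_mul]
  simp [Matrix.vandermonde, Matrix.transpose_apply]

lemma integrand_expand (k : ℕ) (hk : 1 ≤ k) (Q : Fin k → ℕ) (N : ℂ) (w : Fin k → ℂ) :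
    Complex.exp (N * ∑ i, w i) *
        (∏ p ∈ Finset.univ.filter (fun p : Fin k × Fin k => p.1 < p.2), (w p.1 - w p.2)) ^ 2 /
        ∏ l, w l ^ (2 * k + Q l) =
      ∑ st : Equiv.Perm (Fin k) × Equiv.Perm (Fin k),
        (((Equiv.Perm.sign st.1 : ℤ) : ℂ) * ((Equiv.Perm.sign st.2 : ℤ) : ℂ)) *
          ∏ i, (Complex.exp (N * w i) * w i ^ ((st.1 i : ℕ) + (st.2 i : ℕ)) /
            w i ^ (2 * k + Q i)) := by
  by_cases hw : ∀ i, w i ≠ 0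
  · rw [vandermonde_sq, vandermonde_det_expand, sq, Finset.sum_mul_sum,
      show N * ∑ i, w i = ∑ i, N * w i from Finset.mul_sum _ _ _, Complex.exp_sum]
    simp only [Finset.mul_sum, Finset.sum_div]
    rw [Fintype.sum_prod_type]
    refine Finset.sum_congr rfl fun s1 _ => Finset.sum_congr rfl fun s2 _ => ?_
    have : ∀ i : Fin k, Complex.exp (N * w i) * w i ^ ((s1 i : ℕ) + (s2 i : ℕ)) /
        w i ^ (2 * k + Q i) =
        (Complex.exp (N * w i) * (w i ^ (s1 i : ℕ) * w i ^ (s2 i : ℕ))) /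
        w i ^ (2 * k + Q i) := fun i => by rw [pow_add]
    simp only [this]
    rw [Finset.prod_div_distrib, Finset.prod_mul_distrib, Finset.prod_mul_distrib]
    ring
  · push_neg at hw
    obtain ⟨i, hi⟩ := hw
    rw [show (∏ l, w l ^ (2 * k + Q l)) = 0 from
      Finset.prod_eq_zero (Finset.mem_univ i) (by rw [hi]; exact zero_pow (by omega)), div_zero]
    symm
    refine Finset.sum_eq_zero fun st _ => ?_
    rw [Finset.prod_eq_zero (Finset.mem_univ i)
      (by rw [hi, zero_pow (by omega : 2 * k + Q i ≠ 0), div_zero]), mul_zero]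

/-- **Proposition (a `k`-fold contour integral with Vandermonde squared).**
Here `Δ²(w) = (∏_{i<j}(wᵢ−w_j))²`, and the right-hand sum runs over all permutations
`σ ∈ S_k`.  With `0`-based indices the exponent `2k+Q_{σ(i)}−1−(i+j−2)` becomes
`2k+Q(σ i)−1−(i+j)`; the final clause records that each such exponent is a positive
integer. -/
theorem multi_contour_integral_vandermonde (k : ℕ) (hk : 1 ≤ k) (Q : Fin k → ℕ) (N : ℂ) :
    (((2 * (Real.pi : ℂ) * Complex.I) ^ k)⁻¹ *
        multiCircle k (fun w =>
          Complex.exp (N * ∑ i, w i) *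
            (∏ p ∈ Finset.univ.filter (fun p : Fin k × Fin k => p.1 < p.2),
              (w p.1 - w p.2)) ^ 2 /
            ∏ l, w l ^ (2 * k + Q l)) =
      ∑ σ : Equiv.Perm (Fin k),
        (Matrix.of fun i j : Fin k =>
          N ^ (2 * k + Q (σ i) - 1 - ((i : ℕ) + (j : ℕ))) /
            ((2 * k + Q (σ i) - 1 - ((i : ℕ) + (j : ℕ))).factorial : ℂ)).det) ∧
    (∀ σ : Equiv.Perm (Fin k), ∀ i j : Fin k, (i : ℕ) + (j : ℕ) < 2 * k + Q (σ i) - 1) := by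
  constructor
  · -- main equality
    have hrw : (fun w : Fin k → ℂ =>
        Complex.exp (N * ∑ i, w i) *
          (∏ p ∈ Finset.univ.filter (fun p : Fin k × Fin k => p.1 < p.2),
            (w p.1 - w p.2)) ^ 2 /
          ∏ l, w l ^ (2 * k + Q l)) =
        fun w => ∑ st : Equiv.Perm (Fin k) × Equiv.Perm (Fin k),
          (((Equiv.Perm.sign st.1 : ℤ) : ℂ) * ((Equiv.Perm.sign st.2 : ℤ) : ℂ)) *
            ∏ i, ((fun z : ℂ => Complex.exp (N * z) * z ^ ((st.1 i : ℕ) + (st.2 i : ℕ)) /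
              z ^ (2 * k + Q i)) (w i)) :=
      funext fun w => integrand_expand k hk Q N w
    rw [hrw, multiCircle_sum_prod Finset.univ k _ _
      (fun st _ i => circleIntegrable_exp_pow_div N _ _)]
    have hval : ∀ (st : Equiv.Perm (Fin k) × Equiv.Perm (Fin k)) (i : Fin k),
        (∮ z in C(0, 1), Complex.exp (N * z) * z ^ ((st.1 i : ℕ) + (st.2 i : ℕ)) /
          z ^ (2 * k + Q i)) =
        2 * Real.pi * Complex.I *
          (N ^ (2 * k + Q i - 1 - ((st.1 i : ℕ) + (st.2 i : ℕ))) /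
            ((2 * k + Q i - 1 - ((st.1 i : ℕ) + (st.2 i : ℕ))).factorial : ℂ)) := by
      intro st i
      exact circleIntegral_exp_pow_div N _ _ (by
        have h1 := (st.1 i).isLt
        have h2 := (st.2 i).isLt
        omega)
    simp only [hval]
    simp only [Finset.prod_mul_distrib, Finset.prod_const, Finset.card_univ, Fintype.card_fin]
    have hpk : ((2 * (Real.pi : ℂ) * Complex.I) ^ k) ≠ 0 := pow_ne_zero _ two_pi_I_ne
    rw [Finset.mul_sum]
    have hL : ∀ st : Equiv.Perm (Fin k) × Equiv.Perm (Fin k),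
        ((2 * (Real.pi : ℂ) * Complex.I) ^ k)⁻¹ *
          ((((Equiv.Perm.sign st.1 : ℤ) : ℂ) * ((Equiv.Perm.sign st.2 : ℤ) : ℂ)) *
            ((2 : ℂ) ^ k * (Real.pi : ℂ) ^ k * Complex.I ^ k *
              ∏ i, (N ^ (2 * k + Q i - 1 - ((st.1 i : ℕ) + (st.2 i : ℕ))) /
                ((2 * k + Q i - 1 - ((st.1 i : ℕ) + (st.2 i : ℕ))).factorial : ℂ)))) =
        (((Equiv.Perm.sign st.1 : ℤ) : ℂ) * ((Equiv.Perm.sign st.2 : ℤ) : ℂ)) *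
          ∏ i, (N ^ (2 * k + Q i - 1 - ((st.1 i : ℕ) + (st.2 i : ℕ))) /
            ((2 * k + Q i - 1 - ((st.1 i : ℕ) + (st.2 i : ℕ))).factorial : ℂ)) := by
      intro st
      rw [show (2 : ℂ) ^ k * (Real.pi : ℂ) ^ k * Complex.I ^ k =
          (2 * (Real.pi : ℂ) * Complex.I) ^ k by rw [mul_pow, mul_pow],
        mul_left_comm (((Equiv.Perm.sign st.1 : ℤ) : ℂ) * ((Equiv.Perm.sign st.2 : ℤ) : ℂ)),
        ← mul_assoc, inv_mul_cancel₀ hpk, one_mul]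
    simp only [hL]

    -- now expand the determinants on the RHS
    have hdet : ∀ σ : Equiv.Perm (Fin k),
        (Matrix.of fun i j : Fin k =>
          N ^ (2 * k + Q (σ i) - 1 - ((i : ℕ) + (j : ℕ))) /
            ((2 * k + Q (σ i) - 1 - ((i : ℕ) + (j : ℕ))).factorial : ℂ)).det =
        ∑ τ : Equiv.Perm (Fin k), ((Equiv.Perm.sign τ : ℤ) : ℂ) *
          ∏ i, (N ^ (2 * k + Q (σ (τ i)) - 1 - ((τ i : ℕ) + (i : ℕ))) /
            ((2 * k + Q (σ (τ i)) - 1 - ((τ i : ℕ) + (i : ℕ))).factorial : ℂ)) := by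
      intro σ
      rw [Matrix.det_apply]
      refine Finset.sum_congr rfl fun τ _ => ?_
      rw [Units.smul_def, zsmul_eq_mul]
      simp [Matrix.of_apply]
    simp only [hdet]
    refine Eq.trans ?_ (Fintype.sum_prod_type
      (f := fun p : Equiv.Perm (Fin k) × Equiv.Perm (Fin k) =>
        ((Equiv.Perm.sign p.2 : ℤ) : ℂ) *
          ∏ i, (N ^ (2 * k + Q (p.1 (p.2 i)) - 1 - ((p.2 i : ℕ) + (i : ℕ))) /
            ((2 * k + Q (p.1 (p.2 i)) - 1 - ((p.2 i : ℕ) + (i : ℕ))).factorial : ℂ))))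
    refine (Fintype.sum_equiv
      (⟨fun q => (q.1⁻¹, (q.1 * q.2)⁻¹), fun p => (p.1⁻¹, p.1 * p.2⁻¹),
        fun q => by simp [mul_assoc], fun p => by simp⟩ :
        (Equiv.Perm (Fin k) × Equiv.Perm (Fin k)) ≃ (Equiv.Perm (Fin k) × Equiv.Perm (Fin k)))
      _ _ fun q => ?_).symm
    obtain ⟨σ, τ⟩ := q
    simp only [Equiv.coe_fn_mk]
    have hs : ((Equiv.Perm.sign σ⁻¹ : ℤ) : ℂ) * ((Equiv.Perm.sign (σ * τ)⁻¹ : ℤ) : ℂ) =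
        ((Equiv.Perm.sign τ : ℤ) : ℂ) := by
      have h : (Equiv.Perm.sign σ⁻¹) * (Equiv.Perm.sign (σ * τ)⁻¹) = Equiv.Perm.sign τ := by
        rw [Equiv.Perm.sign_inv, Equiv.Perm.sign_inv, Equiv.Perm.sign_mul, ← mul_assoc,
          Int.units_mul_self, one_mul]
      calc ((Equiv.Perm.sign σ⁻¹ : ℤ) : ℂ) * ((Equiv.Perm.sign (σ * τ)⁻¹ : ℤ) : ℂ)
          = (((Equiv.Perm.sign σ⁻¹ * Equiv.Perm.sign (σ * τ)⁻¹ : ℤˣ) : ℤ) : ℂ) := by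
            push_cast; ring
        _ = ((Equiv.Perm.sign τ : ℤ) : ℂ) := by rw [h]
    rw [← hs]
    congr 1
    rw [← Equiv.prod_comp (σ * τ) (fun j => N ^ (2 * k + Q j - 1 - ((σ⁻¹ j : ℕ) + ((σ * τ)⁻¹ j : ℕ))) /
      ((2 * k + Q j - 1 - ((σ⁻¹ j : ℕ) + ((σ * τ)⁻¹ j : ℕ))).factorial : ℂ))]
    refine Finset.prod_congr rfl fun i _ => ?_
    simp [Equiv.Perm.mul_apply, Equiv.symm_apply_apply]
  · intro σ i j
    have h1 := i.isLt
    have h2 := j.isLt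
    omega
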